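/- Let n ≥ 1 be an integer and a,b,c,d : Δ → ℂ holomorphic functions with a(z)d(z) − b(z)c(z) = z^(2n) for all z ∈ Δ. If the map F(z) = z^(−n)·(a(z), b(z); c(z), d(z)) satisfies det F'(z) = 0 for all z ∈ Δ*, then a'(z)d'(z) − b'(z)c'(z) = n²·z^(2n−2) for all z ∈ Δ. -/

import Mathlib

/-!
STATEMENT 1: If `a d − b c = z^(2n)` and `F(z) = z^(−n) • (a,b;c,d)` satisfies
`det F' ≡ 0` on the punctured disc, then `a'd' − b'c' = n² z^(2n−2)` on the disc.
-/

attribute [local instance] Matrix.normedAddCommGroup Matrix.normedSpace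

open Metric Matrix Topology Filter

/-- The open unit disc in `ℂ`. -/
noncomputable def Disc : Set ℂ := Metric.ball (0 : ℂ) 1

/-- The punctured open unit disc in `ℂ`. -/
noncomputable def PDisc : Set ℂ := Metric.ball (0 : ℂ) 1 \ {0}

theorem null_condition_derivative_identity
    (n : ℕ) (hn : 1 ≤ n)
    (a b c d : ℂ → ℂ)
    (ha : DifferentiableOn ℂ a Disc) (hb : DifferentiableOn ℂ b Disc)
    (hc : DifferentiableOn ℂ c Disc) (hd : DifferentiableOn ℂ d Disc)
    (hdet : ∀ z ∈ Disc, a z * d z - b z * c z = z ^ (2 * n))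
    (F : ℂ → Matrix (Fin 2) (Fin 2) ℂ)
    (hF : ∀ z, F z = (z ^ n)⁻¹ • !![a z, b z; c z, d z])
    (hnull : ∀ z ∈ PDisc, (deriv F z).det = 0) :
    ∀ z ∈ Disc,
      deriv a z * deriv d z - deriv b z * deriv c z = (n : ℂ) ^ 2 * z ^ (2 * n - 2) := by
  have hD : IsOpen Disc := isOpen_ball
  obtain ⟨m, rfl⟩ : ∃ m, n = m + 1 := ⟨n - 1, by omega⟩
  set n := m + 1 with hn1
  have key : ∀ z ∈ Disc, z ≠ 0 →
      deriv a z * deriv d z - deriv b z * deriv c z = (n : ℂ) ^ 2 * z ^ (2 * n - 2) := by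
    intro z hz hz0
    have hza : HasDerivAt a (deriv a z) z := (ha.differentiableAt (hD.mem_nhds hz)).hasDerivAt
    have hzb : HasDerivAt b (deriv b z) z := (hb.differentiableAt (hD.mem_nhds hz)).hasDerivAt
    have hzc : HasDerivAt c (deriv c z) z := (hc.differentiableAt (hD.mem_nhds hz)).hasDerivAt
    have hzd : HasDerivAt d (deriv d z) z := (hd.differentiableAt (hD.mem_nhds hz)).hasDerivAt
    have hzn : z ^ n ≠ 0 := pow_ne_zero _ hz0
    -- derivative of the determinant relation
    have hsum : deriv a z * d z + a z * deriv d z - (deriv b z * c z + b z * deriv c z)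
        = 2 * n * z ^ (2 * n - 1) := by
      have h1 : HasDerivAt (fun w => a w * d w - b w * c w)
          (deriv a z * d z + a z * deriv d z - (deriv b z * c z + b z * deriv c z)) z :=
        (hza.mul hzd).sub (hzb.mul hzc)
      have h2 : HasDerivAt (fun w => w ^ (2 * n))
          (deriv a z * d z + a z * deriv d z - (deriv b z * c z + b z * deriv c z)) z := by
        refine h1.congr_of_eventuallyEq ?_
        filter_upwards [hD.mem_nhds hz] with w hw
        exact (hdet w hw).symm
      have h3 := hasDerivAt_pow (2 * n) z
      have := h2.unique h3
      rw [this]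
      push_cast
      ring
    -- derivative of F
    have hu : HasDerivAt (fun w => (w ^ n)⁻¹) (-(↑n * z ^ (n - 1)) / (z ^ n) ^ 2) z :=
      (hasDerivAt_pow n z).inv hzn
    have hM : HasDerivAt (fun w => !![a w, b w; c w, d w])
        !![deriv a z, deriv b z; deriv c z, deriv d z] z := by
      refine hasDerivAt_pi.2 ?_
      intro i
      rw [hasDerivAt_pi]
      intro j
      fin_cases i <;> fin_cases j <;>
        simp only [Matrix.cons_val', Matrix.cons_val_zero, Matrix.cons_val_one,
          Matrix.head_cons, Matrix.head_fin_const, Matrix.empty_val', Matrix.cons_val_fin_one,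
          Matrix.of_apply, Fin.isValue]
      exacts [hza, hzb, hzc, hzd]
    have hFd : HasDerivAt F
        ((z ^ n)⁻¹ • !![deriv a z, deriv b z; deriv c z, deriv d z]
          + (-(↑n * z ^ (n - 1)) / (z ^ n) ^ 2) • !![a z, b z; c z, d z]) z := by
      have : F = fun w => (w ^ n)⁻¹ • !![a w, b w; c w, d w] := funext hF
      rw [this]
      exact hu.smul hM
    have hdF := hFd.deriv
    have hnz := hnull z ⟨hz, hz0⟩
    erw [hdF] at hnz
    simp only [Matrix.det_fin_two_of, Matrix.add_apply, Matrix.smul_apply,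
      Matrix.cons_val', Matrix.cons_val_zero, Matrix.cons_val_one, Matrix.head_cons,
      Matrix.empty_val', Matrix.cons_val_fin_one, Matrix.of_apply, smul_eq_mul,
      Matrix.det_fin_two] at hnz
    have h2n1 : 2 * n - 1 = 2 * m + 1 := by omega
    have h2n2 : 2 * n - 2 = 2 * m := by omega
    have hnm1 : n - 1 = m := by omega
    rw [h2n1] at hsum
    rw [hnm1] at hnz
    rw [h2n2]
    have hdet' := hdet z hz
    have h2n : 2 * n = 2 * m + 2 := by omega
    rw [h2n] at hdet'
    field_simp at hnz
    have hX : z ^ (4*m+4) * ((deriv a z * deriv d z - deriv b z * deriv c z)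
        - (n:ℂ)^2 * z^(2*m)) = 0 := by
      rw [show z ^ n = z ^ (m + 1) by rw [hn1]] at hnz
      linear_combination z ^ (2*m+2) * hnz + ((n:ℂ) * z^(4*m+3)) * hsum - (n:ℂ)^2 * z^(4*m+2) * hdet'
    rcases mul_eq_zero.1 hX with h | h
    · exact absurd h (pow_ne_zero _ hz0)
    · rw [sub_eq_zero] at h
      exact h
  intro z hz
  rcases eq_or_ne z 0 with rfl | hz0
  · have h0 : (0 : ℂ) ∈ Disc := by simp [Disc, Metric.mem_ball]
    have hca : ContinuousAt (fun w => deriv a w * deriv d w - deriv b w * deriv c w) 0 := by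
      have Aa := ((ha.analyticOnNhd hD).deriv 0 h0).continuousAt
      have Ab := ((hb.analyticOnNhd hD).deriv 0 h0).continuousAt
      have Ac := ((hc.analyticOnNhd hD).deriv 0 h0).continuousAt
      have Ad := ((hd.analyticOnNhd hD).deriv 0 h0).continuousAt
      exact (Aa.mul Ad).sub (Ab.mul Ac)
    have hcr : ContinuousAt (fun w : ℂ => (n : ℂ) ^ 2 * w ^ (2 * n - 2)) 0 := by fun_prop
    have heq : (fun w => deriv a w * deriv d w - deriv b w * deriv c w)
        =ᶠ[𝓝[≠] (0 : ℂ)] fun w => (n : ℂ) ^ 2 * w ^ (2 * n - 2) := by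
      filter_upwards [self_mem_nhdsWithin, nhdsWithin_le_nhds (hD.mem_nhds h0)] with w hw1 hw2
      exact key w hw2 hw1
    exact tendsto_nhds_unique_of_eventuallyEq
      (hca.continuousWithinAt.tendsto) (hcr.continuousWithinAt.tendsto) heq
  · exact key z hz hz0
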